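/- arXiv:1607.07654 — 4 statements merged into one kernel-verified Lean document; each statement's English description precedes it below -/
import Mathlib

section
/- Every s-uniform hypergraph tree is strictly balanced. -/
open scoped Classical

/-- A finite `s`-uniform hypergraph on a vertex set of natural numbers. -/
structure UHypergraph (s : ℕ) where
  V : Finset ℕ
  E : Finset (Finset ℕ)
  card_edges : ∀ e ∈ E, e.card = s
  edges_sub : ∀ e ∈ E, e ⊆ V

namespace UHypergraph

/-- The density `|E|/|V|` of a hypergraph. -/
noncomputable def density {s : ℕ} (G : UHypergraph s) : ℚ :=
  (G.E.card : ℚ) / (G.V.card : ℚ)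

/-- `G` is strictly balanced: every proper subhypergraph with at least one
vertex has strictly smaller density. -/
def StrictlyBalanced {s : ℕ} (G : UHypergraph s) : Prop :=
  G.V.Nonempty ∧ ∀ H : UHypergraph s, H.V ⊆ G.V → H.E ⊆ G.E → H.V.Nonempty →
    ¬(H.V = G.V ∧ H.E = G.E) → H.density < G.density

/-- The subhypergraph of `G` induced on the vertex set `S`. -/
def restrict {s : ℕ} (G : UHypergraph s) (S : Finset ℕ) : UHypergraph s where
  V := G.V ∩ S
  E := G.E.filter (fun e => e ⊆ S)
  card_edges := fun e he => G.card_edges e (Finset.mem_filter.mp he).1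
  edges_sub := fun e he a ha => Finset.mem_inter.mpr
    ⟨G.edges_sub e (Finset.mem_filter.mp he).1 ha, (Finset.mem_filter.mp he).2 ha⟩

/-- A cycle `(v 0, e 0, v 1, e 1, …, v (m-1), e (m-1), v m = v 0)` in `G`. -/
def IsCycle {s : ℕ} (G : UHypergraph s) (m : ℕ) (v : ℕ → ℕ) (e : ℕ → Finset ℕ) : Prop :=
  0 < m ∧ v m = v 0 ∧ e m = e 0 ∧
  (∀ i < m, e i ∈ G.E) ∧ (∀ i < m, v i ∈ G.V) ∧
  (∀ i < m, v i ≠ v (i + 1)) ∧ (∀ i < m, e i ≠ e (i + 1)) ∧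
  (∀ i < m, v i ∈ e i ∧ v (i + 1) ∈ e i)

/-- `G` is connected: it is nonempty and any two vertices are joined by a
chain of edges. -/
def Connected {s : ℕ} (G : UHypergraph s) : Prop :=
  G.V.Nonempty ∧ ∀ u ∈ G.V, ∀ w ∈ G.V,
    Relation.ReflTransGen (fun a b => ∃ e ∈ G.E, a ∈ e ∧ b ∈ e) u w

/-- A tree is a connected hypergraph without cycles. -/
def IsTree {s : ℕ} (G : UHypergraph s) : Prop :=
  G.Connected ∧ ¬ ∃ m v e, G.IsCycle m v e

/-- For a rooted pair: number of nonroot vertices minus `α` times the number of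
edges with at least one nonroot vertex, for roots `S` in the hypergraph `K`. -/
noncomputable def exVal {s : ℕ} (α : ℝ) (S : Finset ℕ) (K : UHypergraph s) : ℝ :=
  ((K.V \ S).card : ℝ) - ((K.E.filter (fun f => ¬ f ⊆ S)).card : ℝ) * α

/-- The rooted hypergraph `(S, K)` is dense: `v - e·α < 0`. -/
noncomputable def IsDense {s : ℕ} (α : ℝ) (S : Finset ℕ) (K : UHypergraph s) : Prop :=
  exVal α S K < 0

/-- The rooted hypergraph `(S, K)` is sparse: `v - e·α > 0`. -/
noncomputable def IsSparse {s : ℕ} (α : ℝ) (S : Finset ℕ) (K : UHypergraph s) : Prop :=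
  0 < exVal α S K

/-- `(R, K)` is rigid: every nailextension `(S, K)` with `R ⊆ S ⊊ V(K)` is dense. -/
noncomputable def Rigid {s : ℕ} (α : ℝ) (R : Finset ℕ) (K : UHypergraph s) : Prop :=
  ∀ S : Finset ℕ, R ⊆ S → S ⊂ K.V → IsDense α S K

/-- `(R, K)` is safe: every subextension `(R, K|_S)` with `R ⊊ S ⊆ V(K)` is sparse. -/
noncomputable def Safe {s : ℕ} (α : ℝ) (R : Finset ℕ) (K : UHypergraph s) : Prop :=
  ∀ S : Finset ℕ, R ⊂ S → S ⊆ K.V → IsSparse α R (K.restrict S)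

/-- `(R, K)` is minimally safe: safe, with no safe nailextension. -/
noncomputable def MinimallySafe {s : ℕ} (α : ℝ) (R : Finset ℕ) (K : UHypergraph s) : Prop :=
  Safe α R K ∧ ¬ ∃ S : Finset ℕ, R ⊂ S ∧ S ⊂ K.V ∧ Safe α S K

/-- A rigid `t`-chain `x 0 ⊆ x 1 ⊆ … ⊆ x k` in `G`: each step adds at most `t`
vertices and each `(x i, G|_{x (i+1)})` is rigid. -/
noncomputable def IsRigidChain {s : ℕ} (α : ℝ) (G : UHypergraph s) (t k : ℕ)
    (x : ℕ → Finset ℕ) : Prop :=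
  (∀ i < k, x i ⊆ x (i + 1)) ∧ (∀ i < k, (x (i + 1) \ x i).card ≤ t) ∧
  (∀ i ≤ k, x i ⊆ G.V) ∧ (∀ i < k, Rigid α (x i) (G.restrict (x (i + 1))))

/-- `C` is the `t`-closure of `X` in `G`: it is the endpoint of a rigid
`t`-chain starting at `X` and contains the endpoint of every such chain. -/
noncomputable def IsTClosure {s : ℕ} (α : ℝ) (G : UHypergraph s) (t : ℕ)
    (X C : Finset ℕ) : Prop :=
  (∃ k x, IsRigidChain α G t k x ∧ x 0 = X ∧ x k = C) ∧
  ∀ k' x', IsRigidChain α G t k' x' → x' 0 = X → x' k' ⊆ C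

end UHypergraph

open UHypergraph

/-- The possible edges of an `s`-uniform hypergraph on `Fin n`. -/
def edgeCandidates (s n : ℕ) : Finset (Finset (Fin n)) :=
  Finset.univ.filter (fun e => e.card = s)

/-- The probability of the event `A` under the binomial random `s`-uniform
hypergraph `G^s(n,p)`: each of the `C(n,s)` possible edges appears
independently with probability `p`. -/
noncomputable def hyperProb (s n : ℕ) (p : ℝ) (A : Set (Finset (Finset (Fin n)))) : ℝ :=
  ∑ E ∈ (edgeCandidates s n).powerset,
    if E ∈ A then p ^ E.card * (1 - p) ^ ((edgeCandidates s n).card - E.card) else 0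

/-- The `s`-uniform hypergraph on vertex set `{0,…,n-1}` determined by an
edge set over `Fin n`. -/
noncomputable def ofEdges (s n : ℕ) (E : Finset (Finset (Fin n))) : UHypergraph s where
  V := Finset.range n
  E := (E.filter (fun e => e.card = s)).image (fun e => e.image Fin.val)
  card_edges := by
    intro f hf
    simp only [Finset.mem_image, Finset.mem_filter] at hf
    obtain ⟨e, ⟨_, hcard⟩, rfl⟩ := hf
    rw [Finset.card_image_of_injective _ Fin.val_injective]
    exact hcard
  edges_sub := by
    intro f hf a ha
    simp only [Finset.mem_image, Finset.mem_filter] at hf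
    obtain ⟨e, _, rfl⟩ := hf
    simp only [Finset.mem_image] at ha
    obtain ⟨b, _, rfl⟩ := ha
    exact Finset.mem_range.mpr b.isLt

lemma exists_leaf {s : ℕ} (hs : 2 ≤ s) (G : UHypergraph s)
    (hac : ¬ ∃ m v e, G.IsCycle m v e)
    (F : Finset (Finset ℕ)) (hFE : F ⊆ G.E) (hne : F.Nonempty) :
    ∃ f ∈ F, (f ∩ ((F.erase f).biUnion id)).card ≤ 1 := by
  by_contra hcon
  push_neg at hcon
  have key : ∀ f ∈ F, ∀ v : ℕ, ∃ p : ℕ × Finset ℕ,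
      p.1 ∈ f ∧ p.1 ≠ v ∧ p.2 ∈ F ∧ p.2 ≠ f ∧ p.1 ∈ p.2 := by
    intro f hf v
    obtain ⟨w, hw, hwv⟩ := Finset.exists_mem_ne (hcon f hf) v
    rw [Finset.mem_inter] at hw
    obtain ⟨hw1, hw2⟩ := hw
    rw [Finset.mem_biUnion] at hw2
    obtain ⟨g, hg, hwg⟩ := hw2
    exact ⟨(w, g), hw1, hwv, Finset.mem_of_mem_erase hg, Finset.ne_of_mem_erase hg, hwg⟩
  obtain ⟨f0, hf0⟩ := hne
  have hf0ne : f0.Nonempty := by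
    rw [← Finset.card_pos, G.card_edges f0 (hFE hf0)]; omega
  obtain ⟨v0, hv0⟩ := hf0ne
  let step : {p : ℕ × Finset ℕ // p.2 ∈ F ∧ p.1 ∈ p.2} →
      {p : ℕ × Finset ℕ // p.2 ∈ F ∧ p.1 ∈ p.2} := fun q =>
    ⟨Classical.choose (key q.1.2 q.2.1 q.1.1),
     (Classical.choose_spec (key q.1.2 q.2.1 q.1.1)).2.2.1,
     (Classical.choose_spec (key q.1.2 q.2.1 q.1.1)).2.2.2.2⟩
  let seq : ℕ → {p : ℕ × Finset ℕ // p.2 ∈ F ∧ p.1 ∈ p.2} :=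
    fun n => step^[n] ⟨(v0, f0), hf0, hv0⟩
  set Vv : ℕ → ℕ := fun n => (seq n).1.1 with hVv
  set Ee : ℕ → Finset ℕ := fun n => (seq n).1.2 with hEe
  have hmemF : ∀ n, Ee n ∈ F := fun n => (seq n).2.1
  have hmemE : ∀ n, Vv n ∈ Ee n := fun n => (seq n).2.2
  have hstep : ∀ n, seq (n+1) = step (seq n) := fun n =>
    Function.iterate_succ_apply' step n _
  have hrel : ∀ n, Vv (n+1) ∈ Ee n ∧ Vv (n+1) ≠ Vv n ∧ Ee (n+1) ≠ Ee n := by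
    intro n
    have h := Classical.choose_spec (key (seq n).1.2 (seq n).2.1 (seq n).1.1)
    have h2 : seq (n+1) = step (seq n) := hstep n
    have e1 : Vv (n+1) = (Classical.choose (key (seq n).1.2 (seq n).2.1 (seq n).1.1)).1 :=
      congrArg (fun q => (q : {p : ℕ × Finset ℕ // p.2 ∈ F ∧ p.1 ∈ p.2}).1.1) h2
    have e2 : Ee (n+1) = (Classical.choose (key (seq n).1.2 (seq n).2.1 (seq n).1.1)).2 :=
      congrArg (fun q => (q : {p : ℕ × Finset ℕ // p.2 ∈ F ∧ p.1 ∈ p.2}).1.2) h2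
    rw [e1, e2]
    exact ⟨h.1, h.2.1, h.2.2.2.1⟩
  have hpigeon : ∃ j, ∃ i, i < j ∧ Ee i = Ee j := by
    have maps : ∀ n ∈ Finset.range (F.card + 1), Ee n ∈ F := fun n _ => hmemF n
    have hlt : F.card < (Finset.range (F.card+1)).card := by simp
    obtain ⟨a, _, b, _, hab, heq⟩ :=
      Finset.exists_ne_map_eq_of_card_lt_of_maps_to hlt maps
    rcases lt_or_gt_of_ne hab with h | h
    · exact ⟨b, a, h, heq⟩
    · exact ⟨a, b, h, heq.symm⟩
  let j := Nat.find hpigeon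
  obtain ⟨i, hij, hEij⟩ : ∃ i, i < j ∧ Ee i = Ee j := Nat.find_spec hpigeon
  have hmin : ∀ j' < j, ∀ i' < j', Ee i' ≠ Ee j' := by
    intro j' hj' i' hi' h
    exact Nat.find_min hpigeon hj' ⟨i', hi', h⟩
  have hji : i + 2 ≤ j := by
    rcases Nat.lt_or_ge (i+1) j with h | h
    · omega
    · exfalso
      have : j = i + 1 := by omega
      exact (hrel i).2.2 (this ▸ hEij.symm)
  apply hac
  rcases eq_or_ne (Vv j) (Vv (i+1)) with hv | hv
  · -- case B: close at j-1, m = j - i - 1 ≥ 2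
    have hm3 : i + 3 ≤ j := by
      rcases Nat.lt_or_ge (i+2) j with h | h
      · omega
      · exfalso
        have hj2 : j = i + 2 := by omega
        exact (hrel (i+1)).2.1 (by rw [← hj2, hv])
    set m := j - i - 1 with hm
    refine ⟨m, (fun t => if t = m then Vv (i+1) else Vv (i+1+t)),
      (fun t => if t = m then Ee (i+1) else Ee (i+1+t)), by omega, ?_, ?_, ?_, ?_, ?_, ?_, ?_⟩
    · simp only [if_pos rfl, if_neg (by omega : (0:ℕ) ≠ m)]
      simpa using hv.symm ▸ rfl
    · simp only [if_pos rfl, if_neg (by omega : (0:ℕ) ≠ m)]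
      simp
    · intro t ht
      simp only [if_neg (by omega : t ≠ m)]
      exact hFE (hmemF _)
    · intro t ht
      simp only [if_neg (by omega : t ≠ m)]
      exact G.edges_sub _ (hFE (hmemF _)) (hmemE _)
    · intro t ht
      simp only [if_neg (by omega : t ≠ m)]
      rcases eq_or_ne (t+1) m with h1 | h1
      · rw [if_pos h1]
        have : i + 1 + t = j - 1 := by omega
        rw [this, ← hv]
        have := (hrel (j-1)).2.1
        have hj1 : j - 1 + 1 = j := by omega
        rw [hj1] at this
        exact fun h => this h.symm
      · rw [if_neg h1]
        intro h
        exact (hrel (i+1+t)).2.1 h.symm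
    · intro t ht
      simp only [if_neg (by omega : t ≠ m)]
      rcases eq_or_ne (t+1) m with h1 | h1
      · rw [if_pos h1]
        have heq1 : i + 1 + t = j - 1 := by omega
        rw [heq1]
        exact fun h => hmin (j-1) (by omega) (i+1) (by omega) h.symm
      · rw [if_neg h1]
        intro h
        exact (hrel (i+1+t)).2.2 h.symm
    · intro t ht
      simp only [if_neg (by omega : t ≠ m)]
      constructor
      · exact hmemE _
      · rcases eq_or_ne (t+1) m with h1 | h1
        · rw [if_pos h1]
          have heq1 : i + 1 + t = j - 1 := by omega
          rw [heq1, ← hv]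
          have := (hrel (j-1)).1
          have hj1 : j - 1 + 1 = j := by omega
          rwa [hj1] at this
        · rw [if_neg h1]
          have := (hrel (i+1+t)).1
          have : Vv (i+1+(t+1)) ∈ Ee (i+1+t) := by
            have h2 : i+1+(t+1) = (i+1+t)+1 := by ring
            rw [h2]; exact (hrel (i+1+t)).1
          exact this
  · -- case A: m = j - i ≥ 2
    set m := j - i with hm
    have hm2 : 2 ≤ m := by omega
    refine ⟨m, (fun t => if t = m then Vv (i+1) else Vv (i+1+t)),
      (fun t => if t = m then Ee (i+1) else Ee (i+1+t)), by omega, ?_, ?_, ?_, ?_, ?_, ?_, ?_⟩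
    · simp only [if_pos rfl, if_neg (by omega : (0:ℕ) ≠ m)]
      simp
    · simp only [if_pos rfl, if_neg (by omega : (0:ℕ) ≠ m)]
      simp
    · intro t ht
      simp only [if_neg (by omega : t ≠ m)]
      exact hFE (hmemF _)
    · intro t ht
      simp only [if_neg (by omega : t ≠ m)]
      exact G.edges_sub _ (hFE (hmemF _)) (hmemE _)
    · intro t ht
      simp only [if_neg (by omega : t ≠ m)]
      rcases eq_or_ne (t+1) m with h1 | h1
      · rw [if_pos h1]
        have heq1 : i + 1 + t = j := by omega
        rw [heq1]
        exact hv
      · rw [if_neg h1]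
        intro h
        exact (hrel (i+1+t)).2.1 h.symm
    · intro t ht
      simp only [if_neg (by omega : t ≠ m)]
      rcases eq_or_ne (t+1) m with h1 | h1
      · rw [if_pos h1]
        have heq1 : i + 1 + t = j := by omega
        rw [heq1, ← hEij]
        exact fun h => (hrel i).2.2 h.symm
      · rw [if_neg h1]
        intro h
        exact (hrel (i+1+t)).2.2 h.symm
    · intro t ht
      simp only [if_neg (by omega : t ≠ m)]
      constructor
      · exact hmemE _
      · rcases eq_or_ne (t+1) m with h1 | h1
        · rw [if_pos h1]
          have heq1 : i + 1 + t = j := by omega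
          rw [heq1, ← hEij]
          exact (hrel i).1
        · rw [if_neg h1]
          have : Vv (i+1+(t+1)) ∈ Ee (i+1+t) := by
            have h2 : i+1+(t+1) = (i+1+t)+1 := by ring
            rw [h2]; exact (hrel (i+1+t)).1
          exact this

lemma union_card_lower {s : ℕ} (hs : 2 ≤ s) (G : UHypergraph s)
    (hac : ¬ ∃ m v e, G.IsCycle m v e) :
    ∀ F : Finset (Finset ℕ), F ⊆ G.E → F.Nonempty →
      1 + F.card * (s - 1) ≤ (F.biUnion id).card := by
  intro F
  induction F using Finset.strongInduction with
  | _ F ih =>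
    intro hFE hne
    obtain ⟨f, hfF, hleaf⟩ := exists_leaf hs G hac F hFE hne
    have hfcard : f.card = s := G.card_edges f (hFE hfF)
    have hunion : F.biUnion id = f ∪ (F.erase f).biUnion id := by
      conv_lhs => rw [← Finset.insert_erase hfF]
      rw [Finset.biUnion_insert]
      rfl
    rcases Finset.eq_empty_or_nonempty (F.erase f) with h1 | h1
    · have hF1 : F = {f} := by
        rw [← Finset.insert_erase hfF, h1]; rfl
      rw [hF1]
      simp only [Finset.card_singleton, one_mul, Finset.singleton_biUnion, id]
      omega
    · have hssub : F.erase f ⊂ F := Finset.erase_ssubset hfF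
      have ihh := ih (F.erase f) hssub
        (Finset.Subset.trans (Finset.erase_subset f F) hFE) h1
      have hcardF : F.card = (F.erase f).card + 1 := by
        rw [Finset.card_erase_of_mem hfF]
        have : 1 ≤ F.card := Finset.card_pos.mpr hne
        omega
      have hcu : (f ∪ (F.erase f).biUnion id).card + (f ∩ (F.erase f).biUnion id).card
          = f.card + ((F.erase f).biUnion id).card := Finset.card_union_add_card_inter _ _
      have hprod : F.card * (s-1) = (F.erase f).card * (s-1) + (s-1) := by
        rw [hcardF]; ring
      rw [hunion]
      omega

lemma reflTransGen_cross {α : Type*} (r : α → α → Prop) (P : α → Prop)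
    {u w : α} (h : Relation.ReflTransGen r u w) (hu : P u) (hw : ¬ P w) :
    ∃ a b, r a b ∧ P a ∧ ¬ P b := by
  induction h with
  | refl => exact absurd hu hw
  | tail hab hbc ih =>
    rename_i b c
    by_cases hb : P b
    · exact ⟨b, c, hbc, hb, hw⟩
    · exact ih hb

lemma crossing_edge {s : ℕ} (hs : 2 ≤ s) (G : UHypergraph s) (hcon : G.Connected)
    (F : Finset (Finset ℕ)) (hFE : F ⊆ G.E) (hne : F.Nonempty) (hssub : F ⊂ G.E) :
    ∃ g ∈ G.E, g ∉ F ∧ (g ∩ F.biUnion id).Nonempty := by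
  obtain ⟨g0, hg0E, hg0F⟩ := Finset.exists_of_ssubset hssub
  set A := F.biUnion id with hA
  by_cases hVA : G.V ⊆ A
  · refine ⟨g0, hg0E, hg0F, ?_⟩
    have : g0.Nonempty := by
      rw [← Finset.card_pos, G.card_edges g0 hg0E]; omega
    obtain ⟨x, hx⟩ := this
    exact ⟨x, Finset.mem_inter.mpr ⟨hx, hVA (G.edges_sub g0 hg0E hx)⟩⟩
  · obtain ⟨w, hwV, hwA⟩ := Finset.not_subset.mp hVA
    obtain ⟨f, hfF⟩ := hne
    have hfne : f.Nonempty := by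
      rw [← Finset.card_pos, G.card_edges f (hFE hfF)]; omega
    obtain ⟨u, huf⟩ := hfne
    have huA : u ∈ A := Finset.mem_biUnion.mpr ⟨f, hfF, huf⟩
    have huV : u ∈ G.V := G.edges_sub f (hFE hfF) huf
    have hchain := hcon.2 u huV w hwV
    obtain ⟨a, b, ⟨e, heE, hae, hbe⟩, haA, hbA⟩ :=
      reflTransGen_cross _ (fun x => x ∈ A) hchain huA hwA
    refine ⟨e, heE, ?_, ⟨a, Finset.mem_inter.mpr ⟨hae, haA⟩⟩⟩
    intro heF
    exact hbA (Finset.mem_biUnion.mpr ⟨e, heF, hbe⟩)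

lemma connected_upper {s : ℕ} (hs : 2 ≤ s) (G : UHypergraph s) (hcon : G.Connected) :
    ∀ i, 1 ≤ i → i ≤ G.E.card →
      ∃ F, F ⊆ G.E ∧ F.card = i ∧ (F.biUnion id).card ≤ 1 + i * (s - 1) := by
  intro i
  induction i with
  | zero => omega
  | succ n ihn =>
    intro _ hle
    rcases Nat.eq_zero_or_pos n with hn | hn
    · subst hn
      obtain ⟨f, hf⟩ := Finset.card_pos.mp (by omega : 0 < G.E.card)
      refine ⟨{f}, Finset.singleton_subset_iff.mpr hf, rfl, ?_⟩
      simp only [Finset.singleton_biUnion, id, G.card_edges f hf]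
      omega
    · obtain ⟨F, hFE, hFc, hFu⟩ := ihn hn (by omega)
      have hne : F.Nonempty := Finset.card_pos.mp (by omega)
      have hssub : F ⊂ G.E := HasSubset.Subset.ssubset_of_ne hFE (by
        intro h; rw [h] at hFc; omega)
      obtain ⟨g, hgE, hgF, hgi⟩ := crossing_edge hs G hcon F hFE hne hssub
      refine ⟨insert g F, Finset.insert_subset hgE hFE, ?_, ?_⟩
      · rw [Finset.card_insert_of_notMem hgF, hFc]
      · rw [Finset.biUnion_insert]
        have hcu : ((id g) ∪ F.biUnion id).card + ((id g) ∩ F.biUnion id).card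
            = (id g).card + (F.biUnion id).card := Finset.card_union_add_card_inter _ _
        have hgc : (id g).card = s := G.card_edges g hgE
        have hgi1 : 1 ≤ ((id g) ∩ F.biUnion id).card := Finset.card_pos.mpr hgi
        have hprod : (n+1) * (s-1) = n * (s-1) + (s-1) := by ring
        omega

lemma connected_cover {s : ℕ} (hs : 2 ≤ s) (G : UHypergraph s) (hcon : G.Connected)
    (hE : G.E.Nonempty) : G.V ⊆ G.E.biUnion id := by
  intro v hv
  obtain ⟨f, hf⟩ := hE
  have hfne : f.Nonempty := by
    rw [← Finset.card_pos, G.card_edges f hf]; omega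
  obtain ⟨u, huf⟩ := hfne
  have huV : u ∈ G.V := G.edges_sub f hf huf
  have hchain := hcon.2 v hv u huV
  rcases Relation.ReflTransGen.cases_head hchain with h | h
  · rw [h]; exact Finset.mem_biUnion.mpr ⟨f, hf, huf⟩
  · obtain ⟨c, ⟨e, heE, hve, _⟩, _⟩ := h
    exact Finset.mem_biUnion.mpr ⟨e, heE, hve⟩

theorem stmt4_aux (s : ℕ) (hs : 2 ≤ s) (G : UHypergraph s) (hG : G.Connected ∧ ¬ ∃ m v e, G.IsCycle m v e) :
    G.V.Nonempty ∧ ∀ H : UHypergraph s, H.V ⊆ G.V → H.E ⊆ G.E → H.V.Nonempty →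
    ¬(H.V = G.V ∧ H.E = G.E) → (H.E.card : ℚ) / (H.V.card : ℚ) < (G.E.card : ℚ) / (G.V.card : ℚ) := by
  obtain ⟨hcon, hac⟩ := hG
  refine ⟨hcon.1, ?_⟩
  intro H hV hE hHne hne
  have hVpos : 0 < G.V.card := Finset.card_pos.mpr hcon.1
  rcases Finset.eq_empty_or_nonempty G.E with hGE | hGE
  · exfalso
    obtain ⟨u, hu⟩ := hcon.1
    have hsingle : G.V = {u} := by
      apply Finset.eq_singleton_iff_unique_mem.mpr
      refine ⟨hu, fun w hw => ?_⟩
      have hch := hcon.2 w hw u hu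
      rcases Relation.ReflTransGen.cases_head hch with h | h
      · exact h
      · obtain ⟨c, ⟨e, heE, _⟩, _⟩ := h
        rw [hGE] at heE; simp at heE
    apply hne
    constructor
    · rcases Finset.subset_singleton_iff.mp (hsingle ▸ hV) with h | h
      · exact absurd h (Finset.nonempty_iff_ne_empty.mp hHne)
      · rw [h, hsingle]
    · rw [hGE] at hE ⊢
      exact Finset.subset_empty.mp hE
  · have hk1 : 1 ≤ G.E.card := Finset.card_pos.mpr hGE
    set k := G.E.card with hk
    set c := s - 1 with hc
    have hupper : G.V.card ≤ 1 + k * c := by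
      obtain ⟨F, hF1, hF2, hF3⟩ := connected_upper hs G hcon k hk1 le_rfl
      rw [← hc] at hF3
      have hFeq : F = G.E := Finset.eq_of_subset_of_card_le hF1 (by omega)
      subst hFeq
      have := Finset.card_le_card (connected_cover hs G hcon hGE)
      omega
    have hnHpos : 0 < H.V.card := Finset.card_pos.mpr hHne
    have hGdpos : (0:ℚ) < (k : ℚ) / (G.V.card : ℚ) := by
      apply div_pos
      · exact_mod_cast hk1
      · exact_mod_cast hVpos
    rcases Finset.eq_empty_or_nonempty H.E with hHE | hHE
    · rw [hHE]
      simpa using hGdpos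
    · have he1 : 1 ≤ H.E.card := Finset.card_pos.mpr hHE
      set e := H.E.card with heq
      have hlow' : 1 + e * c ≤ (H.E.biUnion id).card :=
        union_card_lower hs G hac H.E hE hHE
      have hsubV : H.E.biUnion id ⊆ H.V := by
        intro x hx
        obtain ⟨f, hf, hxf⟩ := Finset.mem_biUnion.mp hx
        exact H.edges_sub f hf hxf
      have hlow : 1 + e * c ≤ H.V.card :=
        le_trans hlow' (Finset.card_le_card hsubV)
      have hek : e < k := by
        rcases lt_or_ge e k with h | h
        · exact h
        · exfalso
          have hEeq : H.E = G.E := Finset.eq_of_subset_of_card_le hE h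
          apply hne
          refine ⟨?_, hEeq⟩
          apply Finset.Subset.antisymm hV
          intro x hx
          have := connected_cover hs G hcon hGE hx
          rw [← hEeq] at this
          exact hsubV this
      rw [div_lt_div_iff₀ (by exact_mod_cast hnHpos) (by exact_mod_cast hVpos)]
      have hnat : e * G.V.card < k * H.V.card := by
        calc e * G.V.card ≤ e * (1 + k * c) := Nat.mul_le_mul_left e hupper
          _ < k * (1 + e * c) := by
              have h1 : e * (1 + k * c) = e + e * k * c := by ring
              have h2 : k * (1 + e * c) = k + e * k * c := by ring
              omega
          _ ≤ k * H.V.card := Nat.mul_le_mul_left k hlow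
      exact_mod_cast hnat

/-- every `s`-uniform hypergraph tree is strictly balanced. -/
theorem stmt4 (s : ℕ) (hs : 2 ≤ s) (G : UHypergraph s) (hG : G.IsTree) :
    G.StrictlyBalanced :=
  stmt4_aux s hs G hG
end

section
/- For a strictly balanced s-uniform hypergraph G, for every k ≥ 2 and every t with v(G) ≤ t ≤ k·v(G) − 1, the minimum number e_t of edges in a t-vertex union of k copies of G that are not mutually vertex disjoint satisfies e_t > t·ρ(G). -/
open scoped Classical

open UHypergraph

section Aux9

variable {s k : ℕ}

lemma aux9_density_nonneg (G : UHypergraph s) : 0 ≤ G.density :=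
  div_nonneg (by positivity) (by positivity)

lemma aux9_density_mul_card (G : UHypergraph s) (h : G.V.Nonempty) :
    G.density * (G.V.card : ℚ) = (G.E.card : ℚ) := by
  have hv : (G.V.card : ℚ) ≠ 0 := Nat.cast_ne_zero.mpr (Finset.card_ne_zero.mpr h)
  rw [UHypergraph.density, div_mul_cancel₀ _ hv]

lemma aux9_eSub_lt (G : UHypergraph s) (hG : G.StrictlyBalanced)
    {S : Finset ℕ} (hSV : S ⊆ G.V) (hne : S.Nonempty) (hpr : S ≠ G.V) :
    ((G.E.filter (fun e => e ⊆ S)).card : ℚ) < G.density * (S.card : ℚ) := by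
  have hVS : (G.restrict S).V = S := Finset.inter_eq_right.mpr hSV
  have h := hG.2 (G.restrict S) (by rw [hVS]; exact hSV)
    (Finset.filter_subset _ _) (by rw [hVS]; exact hne)
    (by rw [hVS]; rintro ⟨h1, -⟩; exact hpr h1)
  have hScard : (0 : ℚ) < (S.card : ℚ) := by
    exact_mod_cast Finset.card_pos.mpr hne
  rw [UHypergraph.density, UHypergraph.density, hVS] at h
  calc ((G.E.filter (fun e => e ⊆ S)).card : ℚ)
      = ((G.restrict S).E.card : ℚ) / (S.card : ℚ) * (S.card : ℚ) := by
        simp [UHypergraph.restrict]; field_simp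
    _ < G.density * (S.card : ℚ) := by
        apply mul_lt_mul_of_pos_right _ hScard
        exact h

lemma aux9_eSub_le (hs : 2 ≤ s) (G : UHypergraph s) (hG : G.StrictlyBalanced)
    {S : Finset ℕ} (hSV : S ⊆ G.V) :
    ((G.E.filter (fun e => e ⊆ S)).card : ℚ) ≤ G.density * (S.card : ℚ) := by
  rcases eq_or_ne S G.V with rfl | hpr
  · rw [Finset.filter_true_of_mem (fun e he => G.edges_sub e he),
      aux9_density_mul_card G hG.1]
  rcases S.eq_empty_or_nonempty with rfl | hne
  · have hemp : G.E.filter (fun e => e ⊆ (∅ : Finset ℕ)) = ∅ := by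
      rw [Finset.filter_eq_empty_iff]
      intro e he hsub
      have h1 := G.card_edges e he
      rw [Finset.subset_empty.mp hsub] at h1
      simp at h1
      omega
    rw [hemp]
    simp
  · exact (aux9_eSub_lt G hG hSV hne hpr).le

/-- vertex set of the union of the copies indexed by `I` -/
noncomputable def aux9uV (G : UHypergraph s) (φ : Fin k → ℕ → ℕ) (I : Finset (Fin k)) :
    Finset ℕ := I.biUnion (fun i => G.V.image (φ i))

/-- edge set of the union of the copies indexed by `I` -/
noncomputable def aux9uE (G : UHypergraph s) (φ : Fin k → ℕ → ℕ) (I : Finset (Fin k)) :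
    Finset (Finset ℕ) := I.biUnion (fun i => G.E.image (fun e => e.image (φ i)))

lemma aux9_uE_sub_uV (G : UHypergraph s) (φ : Fin k → ℕ → ℕ) (I : Finset (Fin k)) :
    ∀ f ∈ aux9uE G φ I, f ⊆ aux9uV G φ I := by
  intro f hf
  simp only [aux9uE, Finset.mem_biUnion, Finset.mem_image] at hf
  obtain ⟨i, hi, e, he, rfl⟩ := hf
  intro y hy
  simp only [Finset.mem_image] at hy
  obtain ⟨x, hx, rfl⟩ := hy
  exact Finset.mem_biUnion.mpr ⟨i, hi, Finset.mem_image_of_mem _ (G.edges_sub e he hx)⟩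

lemma aux9_card_Vi (G : UHypergraph s) {φ : Fin k → ℕ → ℕ}
    (hinj : ∀ i, Set.InjOn (φ i) G.V) (i : Fin k) :
    (G.V.image (φ i)).card = G.V.card :=
  Finset.card_image_of_injOn (hinj i)

lemma aux9_edgeImage_injOn (G : UHypergraph s) {φ : Fin k → ℕ → ℕ}
    (hinj : ∀ i, Set.InjOn (φ i) G.V) (i : Fin k) :
    Set.InjOn (fun e => e.image (φ i)) (G.E : Set (Finset ℕ)) := by
  intro e1 h1 e2 h2 h
  simp only [Finset.mem_coe] at h1 h2
  have key : ∀ a b : Finset ℕ, a ∈ G.E → b ∈ G.E →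
      a.image (φ i) = b.image (φ i) → a ⊆ b := by
    intro a b ha hb hab x hx
    have : φ i x ∈ b.image (φ i) := by
      rw [← hab]; exact Finset.mem_image_of_mem _ hx
    obtain ⟨y, hy, hyx⟩ := Finset.mem_image.mp this
    have := hinj i (G.edges_sub b hb hy) (G.edges_sub a ha hx) hyx
    rwa [← this]
  exact Finset.Subset.antisymm (key e1 e2 h1 h2 h) (key e2 e1 h2 h1 h.symm)

lemma aux9_card_Ei (G : UHypergraph s) {φ : Fin k → ℕ → ℕ}
    (hinj : ∀ i, Set.InjOn (φ i) G.V) (i : Fin k) :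
    (G.E.image (fun e => e.image (φ i))).card = G.E.card :=
  Finset.card_image_of_injOn (aux9_edgeImage_injOn G hinj i)

/-- vertex count bookkeeping for adding copy `c` -/
lemma aux9_step_v (G : UHypergraph s) {φ : Fin k → ℕ → ℕ}
    (hinj : ∀ i, Set.InjOn (φ i) G.V) (c : Fin k) (I : Finset (Fin k)) :
    (aux9uV G φ (insert c I)).card +
      (G.V.filter (fun x => φ c x ∈ aux9uV G φ I)).card
      = (aux9uV G φ I).card + G.V.card := by
  have h1 : aux9uV G φ (insert c I) = G.V.image (φ c) ∪ aux9uV G φ I :=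
    Finset.biUnion_insert ..
  have h2 : G.V.image (φ c) \ aux9uV G φ I =
      (G.V.filter (fun x => φ c x ∉ aux9uV G φ I)).image (φ c) := by
    ext y
    simp only [Finset.mem_sdiff, Finset.mem_image, Finset.mem_filter]
    constructor
    · rintro ⟨⟨x, hx, rfl⟩, hy⟩; exact ⟨x, ⟨hx, hy⟩, rfl⟩
    · rintro ⟨x, ⟨hx, hnx⟩, rfl⟩; exact ⟨⟨x, hx, rfl⟩, hnx⟩
  have h3 : (G.V.image (φ c) \ aux9uV G φ I).card
      = (G.V.filter (fun x => φ c x ∉ aux9uV G φ I)).card := by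
    rw [h2]
    exact Finset.card_image_of_injOn ((hinj c).mono (by
      intro x hx; exact (Finset.mem_filter.mp hx).1))
  have h4 := Finset.card_filter_add_card_filter_not
    (s := G.V) (p := fun x => φ c x ∈ aux9uV G φ I)
  have h5 : (aux9uV G φ (insert c I)).card
      = (G.V.image (φ c) \ aux9uV G φ I).card + (aux9uV G φ I).card := by
    rw [h1, ← Finset.card_sdiff_add_card]
  omega

/-- edge count bookkeeping for adding copy `c` -/
lemma aux9_step_e (G : UHypergraph s) {φ : Fin k → ℕ → ℕ}
    (hinj : ∀ i, Set.InjOn (φ i) G.V) (c : Fin k) (I : Finset (Fin k)) :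
    (aux9uE G φ I).card + G.E.card ≤ (aux9uE G φ (insert c I)).card +
      (G.E.filter (fun e => e ⊆ G.V.filter (fun x => φ c x ∈ aux9uV G φ I))).card := by
  set T := G.V.filter (fun x => φ c x ∈ aux9uV G φ I) with hT
  have h1 : aux9uE G φ (insert c I)
      = G.E.image (fun e => e.image (φ c)) ∪ aux9uE G φ I :=
    Finset.biUnion_insert ..
  have hsub : (G.E.filter (fun e => ¬ e ⊆ T)).image (fun e => e.image (φ c))
      ⊆ (G.E.image (fun e => e.image (φ c))) \ aux9uE G φ I := by
    intro f hf
    simp only [Finset.mem_image, Finset.mem_filter] at hf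
    obtain ⟨e, ⟨he, hnT⟩, rfl⟩ := hf
    rw [Finset.mem_sdiff]
    refine ⟨Finset.mem_image_of_mem _ he, ?_⟩
    intro hB
    apply hnT
    intro x hx
    rw [hT, Finset.mem_filter]
    refine ⟨G.edges_sub e he hx, ?_⟩
    exact aux9_uE_sub_uV G φ I _ hB (Finset.mem_image_of_mem _ hx)
  have h2 : (G.E.filter (fun e => ¬ e ⊆ T)).card
      ≤ ((G.E.image (fun e => e.image (φ c))) \ aux9uE G φ I).card := by
    rw [← Finset.card_image_of_injOn
      ((aux9_edgeImage_injOn G hinj c).mono (by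
        intro e he; exact (Finset.mem_filter.mp he).1))]
    exact Finset.card_le_card hsub
  have h3 := Finset.card_filter_add_card_filter_not
    (s := G.E) (p := fun e => e ⊆ T)
  have h4 : (aux9uE G φ (insert c I)).card
      = ((G.E.image (fun e => e.image (φ c))) \ aux9uE G φ I).card
        + (aux9uE G φ I).card := by
    rw [h1, ← Finset.card_sdiff_add_card]
  omega

/-- the main per-step inequality with explicit slack -/
lemma aux9_step (G : UHypergraph s) (hG : G.StrictlyBalanced) {φ : Fin k → ℕ → ℕ}
    (hinj : ∀ i, Set.InjOn (φ i) G.V) (c : Fin k) (I : Finset (Fin k)) :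
    G.density * ((aux9uV G φ (insert c I)).card : ℚ) + ((aux9uE G φ I).card : ℚ)
      + (G.density * ((G.V.filter (fun x => φ c x ∈ aux9uV G φ I)).card : ℚ)
         - ((G.E.filter (fun e => e ⊆ G.V.filter
              (fun x => φ c x ∈ aux9uV G φ I))).card : ℚ))
      ≤ G.density * ((aux9uV G φ I).card : ℚ) + ((aux9uE G φ (insert c I)).card : ℚ) := by
  have hv := aux9_step_v G hinj c I
  have he := aux9_step_e G hinj c I
  have hρ := aux9_density_mul_card G hG.1
  set cT := (G.V.filter (fun x => φ c x ∈ aux9uV G φ I)).card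
  have hvq : ((aux9uV G φ (insert c I)).card : ℚ) + (cT : ℚ)
      = ((aux9uV G φ I).card : ℚ) + (G.V.card : ℚ) := by exact_mod_cast hv
  have heq : ((aux9uE G φ I).card : ℚ) + (G.E.card : ℚ)
      ≤ ((aux9uE G φ (insert c I)).card : ℚ)
        + ((G.E.filter (fun e => e ⊆ G.V.filter
            (fun x => φ c x ∈ aux9uV G φ I))).card : ℚ) := by exact_mod_cast he
  have h1 : G.density * ((aux9uV G φ (insert c I)).card : ℚ)
      = G.density * ((aux9uV G φ I).card : ℚ) + (G.E.card : ℚ) - G.density * (cT : ℚ) := by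
    have : ((aux9uV G φ (insert c I)).card : ℚ)
        = ((aux9uV G φ I).card : ℚ) + (G.V.card : ℚ) - (cT : ℚ) := by linarith
    rw [this]; ring_nf; rw [mul_comm] at hρ ⊢; linarith [hρ]
  linarith

end Aux9

section Aux9b
variable {s k : ℕ}

/-- non-strict bound: any union of copies has at least `ρ·v` edges -/
lemma aux9_NS (G : UHypergraph s) (hs : 2 ≤ s) (hG : G.StrictlyBalanced)
    {φ : Fin k → ℕ → ℕ} (hinj : ∀ i, Set.InjOn (φ i) G.V) :
    ∀ I : Finset (Fin k),
      G.density * ((aux9uV G φ I).card : ℚ) ≤ ((aux9uE G φ I).card : ℚ) := by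
  intro I
  induction I using Finset.strongInduction with
  | _ I IH =>
    rcases I.eq_empty_or_nonempty with rfl | ⟨c, hc⟩
    · simp [aux9uV, aux9uE]
    · have hins : I = insert c (I.erase c) := (Finset.insert_erase hc).symm
      have hIH := IH (I.erase c) (Finset.erase_ssubset hc)
      have hstep := aux9_step G hG hinj c (I.erase c)
      have hslack := aux9_eSub_le hs G hG
        (Finset.filter_subset (fun x => φ c x ∈ aux9uV G φ (I.erase c)) G.V)
      rw [hins]
      linarith

lemma aux9_strict (G : UHypergraph s) (hs : 2 ≤ s) (hG : G.StrictlyBalanced)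
    {φ : Fin k → ℕ → ℕ} (hinj : ∀ i, Set.InjOn (φ i) G.V)
    (hdistinct : ∀ i j : Fin k, i ≠ j →
      (G.V.image (φ i), G.E.image (fun e => e.image (φ i))) ≠
        (G.V.image (φ j), G.E.image (fun e => e.image (φ j))))
    (ε : ℚ) (hε1 : ε ≤ 1)
    (hεS : ∀ S : Finset ℕ, S ⊆ G.V → S.Nonempty → S ≠ G.V →
      ((G.E.filter (fun e => e ⊆ S)).card : ℚ) + ε ≤ G.density * (S.card : ℚ)) :
    ∀ I : Finset (Fin k),
      (∃ a ∈ I, ∃ b ∈ I, a ≠ b ∧ ¬ Disjoint (G.V.image (φ a)) (G.V.image (φ b))) →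
      G.density * ((aux9uV G φ I).card : ℚ) + ε ≤ ((aux9uE G φ I).card : ℚ) := by
  intro I
  induction I using Finset.strongInduction with
  | _ I IH =>
    rintro ⟨a, ha, b, hb, hab, hnd⟩
    by_cases hbig : ∃ c ∈ I, c ≠ a ∧ c ≠ b
    · obtain ⟨c, hc, hca, hcb⟩ := hbig
      have hins : I = insert c (I.erase c) := (Finset.insert_erase hc).symm
      have hIH := IH (I.erase c) (Finset.erase_ssubset hc)
        ⟨a, Finset.mem_erase.mpr ⟨(Ne.symm hca), ha⟩,
         b, Finset.mem_erase.mpr ⟨(Ne.symm hcb), hb⟩, hab, hnd⟩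
      have hstep := aux9_step G hG hinj c (I.erase c)
      have hslack := aux9_eSub_le hs G hG
        (Finset.filter_subset (fun x => φ c x ∈ aux9uV G φ (I.erase c)) G.V)
      rw [hins]
      linarith
    · -- I = {a, b}
      push_neg at hbig
      have hI : I = insert b {a} := by
        apply Finset.Subset.antisymm
        · intro x hx
          rcases eq_or_ne x a with rfl | hxa
          · simp
          · rw [hbig x hx hxa]; simp
        · intro x hx
          simp only [Finset.mem_insert, Finset.mem_singleton] at hx
          rcases hx with rfl | rfl <;> assumption
      subst hI
      -- base: union over {a}
      have hVa : aux9uV G φ {a} = G.V.image (φ a) := Finset.singleton_biUnion ..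
      have hEa : aux9uE G φ {a} = G.E.image (fun e => e.image (φ a)) :=
        Finset.singleton_biUnion ..
      have hbase : G.density * ((aux9uV G φ {a}).card : ℚ) = ((aux9uE G φ {a}).card : ℚ) := by
        rw [hVa, hEa, aux9_card_Vi G hinj a, aux9_card_Ei G hinj a,
          aux9_density_mul_card G hG.1]
      set T := G.V.filter (fun x => φ b x ∈ aux9uV G φ {a}) with hTdef
      have hTV : T ⊆ G.V := Finset.filter_subset _ _
      have hTne : T.Nonempty := by
        obtain ⟨y, hy1, hy2⟩ := Finset.not_disjoint_iff.mp hnd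
        obtain ⟨x, hx, rfl⟩ := Finset.mem_image.mp hy2
        exact ⟨x, Finset.mem_filter.mpr ⟨hx, by rw [hVa]; exact hy1⟩⟩
      rcases eq_or_ne T G.V with hTfull | hTpr
      · -- V_b = V_a; copies differ in edges, at least one new edge
        have hVba : G.V.image (φ b) = G.V.image (φ a) := by
          apply Finset.eq_of_subset_of_card_le
          · intro y hy
            obtain ⟨x, hx, rfl⟩ := Finset.mem_image.mp hy
            have : x ∈ T := hTfull ▸ hx
            have := (Finset.mem_filter.mp this).2
            rwa [hVa] at this
          · rw [aux9_card_Vi G hinj a, aux9_card_Vi G hinj b]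
        have hEba : G.E.image (fun e => e.image (φ b)) ≠
            G.E.image (fun e => e.image (φ a)) := by
          intro h
          exact hdistinct b a hab.symm (by rw [hVba, h])
        have hnotsub : ¬ G.E.image (fun e => e.image (φ b)) ⊆
            G.E.image (fun e => e.image (φ a)) := by
          intro h
          exact hEba (Finset.eq_of_subset_of_card_le h
            (by rw [aux9_card_Ei G hinj a, aux9_card_Ei G hinj b]))
        obtain ⟨f, hf1, hf2⟩ := Finset.not_subset.mp hnotsub
        have hVins : aux9uV G φ (insert b {a}) = G.V.image (φ a) := by
          rw [aux9uV, Finset.biUnion_insert, hVba]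
          simp [aux9uV] at hVa ⊢
        have hEins : aux9uE G φ (insert b {a})
            = G.E.image (fun e => e.image (φ b)) ∪ aux9uE G φ {a} :=
          Finset.biUnion_insert ..
        have hcard1 : (aux9uE G φ {a}).card + 1 ≤ (aux9uE G φ (insert b {a})).card := by
          rw [hEins]
          have hfmem : f ∈ (G.E.image (fun e => e.image (φ b)) ∪ aux9uE G φ {a}) \
              aux9uE G φ {a} := by
            rw [Finset.mem_sdiff, hEa]
            exact ⟨Finset.mem_union_left _ hf1, hf2⟩
          have h1 : 1 ≤ ((G.E.image (fun e => e.image (φ b)) ∪ aux9uE G φ {a}) \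
              aux9uE G φ {a}).card := Finset.card_pos.mpr ⟨f, hfmem⟩
          have h2 := Finset.card_sdiff_add_card
            (s := G.E.image (fun e => e.image (φ b)) ∪ aux9uE G φ {a})
            (t := aux9uE G φ {a})
          have h3 : aux9uE G φ {a} ∪ (G.E.image (fun e => e.image (φ b)) ∪ aux9uE G φ {a})
              = G.E.image (fun e => e.image (φ b)) ∪ aux9uE G φ {a} := by
            rw [Finset.union_comm, Finset.union_assoc, Finset.union_self]
          rw [Finset.union_comm] at h3
          rw [h3] at h2
          omega
        have hVcard : (aux9uV G φ (insert b {a})).card = (aux9uV G φ {a}).card := by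
          rw [hVins, hVa]
        have hq : ((aux9uE G φ {a}).card : ℚ) + 1
            ≤ ((aux9uE G φ (insert b {a})).card : ℚ) := by exact_mod_cast hcard1
        rw [hVcard]
        linarith
      · have hstep := aux9_step G hG hinj b {a}
        have hslack := hεS T hTV hTne hTpr
        linarith

end Aux9b


/-- for a strictly balanced `G`, any union of `k ≥ 2` distinct,
not mutually vertex disjoint copies of `G` on `t` vertices
(`v(G) ≤ t ≤ k·v(G) - 1`) has more than `t·ρ(G)` edges. -/
theorem stmt9 (s k t : ℕ) (hs : 2 ≤ s) (hk : 2 ≤ k) (G : UHypergraph s)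
    (hG : G.StrictlyBalanced)
    (ht₁ : G.V.card ≤ t) (ht₂ : t ≤ k * G.V.card - 1)
    (φ : Fin k → ℕ → ℕ) (hinj : ∀ i, Set.InjOn (φ i) G.V)
    (hdistinct : ∀ i j : Fin k, i ≠ j →
      (G.V.image (φ i), G.E.image (fun e => e.image (φ i))) ≠
        (G.V.image (φ j), G.E.image (fun e => e.image (φ j))))
    (hnd : ∃ i j : Fin k, i ≠ j ∧ ¬ Disjoint (G.V.image (φ i)) (G.V.image (φ j)))
    (htv : ((Finset.univ : Finset (Fin k)).biUnion (fun i => G.V.image (φ i))).card = t) :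
    (t : ℚ) * G.density <
      (((Finset.univ : Finset (Fin k)).biUnion
        (fun i => G.E.image (fun e => e.image (φ i)))).card : ℚ) := by
  classical
  set P := (G.V.powerset.filter (fun S => S.Nonempty ∧ S ≠ G.V)).image
      (fun S => G.density * (S.card : ℚ) - ((G.E.filter (fun e => e ⊆ S)).card : ℚ))
    with hP
  set F := insert (1 : ℚ) P with hF
  have hFne : F.Nonempty := Finset.insert_nonempty _ _
  set ε := F.min' hFne with hε
  have hε1 : ε ≤ 1 := Finset.min'_le _ _ (Finset.mem_insert_self _ _)
  have hεS : ∀ S : Finset ℕ, S ⊆ G.V → S.Nonempty → S ≠ G.V →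
      ((G.E.filter (fun e => e ⊆ S)).card : ℚ) + ε ≤ G.density * (S.card : ℚ) := by
    intro S hSV hne hpr
    have hmem : G.density * (S.card : ℚ) - ((G.E.filter (fun e => e ⊆ S)).card : ℚ) ∈ F :=
      Finset.mem_insert_of_mem (Finset.mem_image_of_mem _
        (Finset.mem_filter.mpr ⟨Finset.mem_powerset.mpr hSV, hne, hpr⟩))
    have := Finset.min'_le _ _ hmem
    linarith
  have hεpos : 0 < ε := by
    have hmem := Finset.min'_mem F hFne
    rw [← hε] at hmem
    rcases Finset.mem_insert.mp hmem with h | h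
    · rw [h]; norm_num
    · obtain ⟨S, hS, hval⟩ := Finset.mem_image.mp h
      obtain ⟨hSV, hne, hpr⟩ := Finset.mem_filter.mp hS
      have := aux9_eSub_lt G hG (Finset.mem_powerset.mp hSV) hne hpr
      rw [← hval]; linarith
  obtain ⟨a, b, hab, hnd'⟩ := hnd
  have hmain := aux9_strict G hs hG hinj hdistinct ε hε1 hεS Finset.univ
    ⟨a, Finset.mem_univ a, b, Finset.mem_univ b, hab, hnd'⟩
  have ht : (aux9uV G φ (Finset.univ : Finset (Fin k))).card = t := htv
  rw [ht] at hmain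
  show (t : ℚ) * G.density < ((aux9uE G φ (Finset.univ : Finset (Fin k))).card : ℚ)
  rw [mul_comm]
  linarith
end

section
/- Let α > 0 be irrational, G an s-uniform hypergraph, and t a positive integer. If x = x_0 ⊂ x_1 ⊂ … ⊂ x_k = z and y = y_0 ⊂ y_1 ⊂ … ⊂ y_l, with y ⊆ z, are rigid t-chains in G, then x = x_0 ⊂ … ⊂ x_k ∪ y_1 ⊂ … ⊂ x_k ∪ y_l = z ∪ y_l is also a rigid t-chain; consequently, the t-closure cl_t(x) (the maximal endpoint of a rigid t-chain starting at x, or x itself if none exists) is well defined. -/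
open scoped Classical

open UHypergraph

lemma rigid_union {s : ℕ} {α : ℝ} (hα : 0 < α) (G : UHypergraph s)
    {R B : Finset ℕ} (W : Finset ℕ) (hRB : R ⊆ B)
    (h : Rigid α R (G.restrict B)) :
    Rigid α (R ∪ W) (G.restrict (B ∪ W)) := by
  intro S hRS hSV
  have hW : W ⊆ S := (Finset.union_subset_iff.mp hRS).2
  have hR : R ⊆ S := (Finset.union_subset_iff.mp hRS).1
  have hRS' : R ⊆ S ∩ B := Finset.subset_inter hR hRB
  obtain ⟨v, hv, hvS⟩ := Finset.exists_of_ssubset hSV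
  simp only [restrict, Finset.mem_inter, Finset.mem_union] at hv
  have hvW : v ∉ W := fun hvW => hvS (hW hvW)
  have hvB : v ∈ B := hv.2.resolve_right hvW
  have hproper : S ∩ B ⊂ (G.restrict B).V := by
    rw [Finset.ssubset_iff_of_subset]
    · exact ⟨v, by simp [restrict, hv.1, hvB], fun hc => hvS (Finset.mem_inter.mp hc).1⟩
    · intro a ha
      have h1 := (Finset.mem_inter.mp ha).1
      have h2 := (Finset.mem_inter.mp ha).2
      have := (Finset.mem_inter.mp (hSV.1 h1)).1
      exact Finset.mem_inter.mpr ⟨this, h2⟩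
  have hdense := h (S ∩ B) hRS' hproper
  have hVeq : ((G.restrict (B ∪ W)).V \ S) = ((G.restrict B).V \ (S ∩ B)) := by
    ext a
    simp only [restrict, Finset.mem_sdiff, Finset.mem_inter, Finset.mem_union]
    have := @hW a
    constructor
    · rintro ⟨⟨haV, haBW⟩, haS⟩
      exact ⟨⟨haV, haBW.resolve_right (fun hw => haS (hW hw))⟩, fun hc => haS hc.1⟩
    · rintro ⟨⟨haV, haB⟩, haSB⟩
      exact ⟨⟨haV, Or.inl haB⟩, fun hs => haSB ⟨hs, haB⟩⟩
  have hEsub : ((G.restrict B).E.filter (fun f => ¬ f ⊆ S ∩ B)) ⊆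
      ((G.restrict (B ∪ W)).E.filter (fun f => ¬ f ⊆ S)) := by
    intro e he
    simp only [restrict, Finset.mem_filter] at he ⊢
    exact ⟨⟨he.1.1, he.1.2.trans Finset.subset_union_left⟩,
      fun hs => he.2 (Finset.subset_inter hs he.1.2)⟩
  have hcard := Finset.card_le_card hEsub
  unfold IsDense exVal at hdense ⊢
  rw [hVeq]
  have hmul : (((G.restrict B).E.filter (fun f => ¬ f ⊆ S ∩ B)).card : ℝ) * α ≤
      (((G.restrict (B ∪ W)).E.filter (fun f => ¬ f ⊆ S)).card : ℝ) * α := by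
    apply mul_le_mul_of_nonneg_right _ hα.le
    exact_mod_cast hcard
  linarith

lemma chain_concat {s : ℕ} {α : ℝ} (hα : 0 < α) (G : UHypergraph s) (t k l : ℕ)
    (x y : ℕ → Finset ℕ)
    (hx : IsRigidChain α G t k x) (hy : IsRigidChain α G t l y)
    (hstart : y 0 ⊆ x k) :
    IsRigidChain α G t (k + l) (fun i => if i ≤ k then x i else x k ∪ y (i - k)) ∧
      (fun i => if i ≤ k then x i else x k ∪ y (i - k)) (k + l) = x k ∪ y l := by
  set z : ℕ → Finset ℕ := fun i => if i ≤ k then x i else x k ∪ y (i - k) with hzdef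
  have hz : ∀ i, k ≤ i → z i = x k ∪ y (i - k) := by
    intro i hi
    rcases eq_or_lt_of_le hi with rfl | h
    · simp [hzdef, Finset.union_eq_left.mpr hstart]
    · simp [hzdef, Nat.not_le.mpr h]
  have hzle : ∀ i, i ≤ k → z i = x i := fun i hi => by simp [hzdef, hi]
  constructor
  · refine ⟨?_, ?_, ?_, ?_⟩
    · intro i hi
      rcases lt_or_ge i k with h | h
      · rw [hzle i h.le, hzle (i + 1) h]
        exact hx.1 i h
      · rw [hz i h, hz (i + 1) (h.trans (Nat.le_succ i))]
        have hj : i + 1 - k = (i - k) + 1 := by omega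
        rw [hj]
        exact Finset.union_subset_union_right (hy.1 (i - k) (by omega))
    · intro i hi
      rcases lt_or_ge i k with h | h
      · rw [hzle i h.le, hzle (i + 1) h]
        exact hx.2.1 i h
      · rw [hz i h, hz (i + 1) (h.trans (Nat.le_succ i))]
        have hj : i + 1 - k = (i - k) + 1 := by omega
        rw [hj]
        refine le_trans (Finset.card_le_card ?_) (hy.2.1 (i - k) (by omega))
        intro a ha
        rw [Finset.mem_sdiff] at ha ⊢
        refine ⟨?_, fun hc => ha.2 (Finset.mem_union_right _ hc)⟩
        rcases Finset.mem_union.mp ha.1 with h1 | h1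
        · exact absurd (Finset.mem_union_left _ h1) ha.2
        · exact h1
    · intro i hi
      rcases le_or_gt i k with h | h
      · rw [hzle i h]; exact hx.2.2.1 i h
      · rw [hz i h.le]
        exact Finset.union_subset (hx.2.2.1 k le_rfl) (hy.2.2.1 (i - k) (by omega))
    · intro i hi
      rcases lt_or_ge i k with h | h
      · rw [hzle i h.le, hzle (i + 1) h]
        exact hx.2.2.2 i h
      · rw [hz i h, hz (i + 1) (h.trans (Nat.le_succ i))]
        have hj : i + 1 - k = (i - k) + 1 := by omega
        rw [hj]
        have := rigid_union hα G (x k) (hy.1 (i - k) (by omega)) (hy.2.2.2 (i - k) (by omega))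
        rwa [Finset.union_comm (y (i - k)) (x k),
          Finset.union_comm (y (i - k + 1)) (x k)] at this
  · show z (k + l) = x k ∪ y l
    rw [hz (k + l) (Nat.le_add_right k l)]
    have : k + l - k = l := by omega
    rw [this]

lemma chain_start_subset {s : ℕ} {α : ℝ} {G : UHypergraph s} {t k : ℕ}
    {x : ℕ → Finset ℕ} (hx : IsRigidChain α G t k x) : x 0 ⊆ x k := by
  have : ∀ i, i ≤ k → x 0 ⊆ x i := by
    intro i
    induction i with
    | zero => intro _; exact Finset.Subset.refl _
    | succ n ih => intro h; exact (ih (by omega)).trans (hx.1 n (by omega))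
  exact this k le_rfl

/-- concatenating a rigid `t`-chain `x 0 ⊆ … ⊆ x k` with a rigid
`t`-chain `y 0 ⊆ … ⊆ y l` satisfying `y 0 ⊆ x k` (by taking unions with `x k`)
yields a rigid `t`-chain from `x 0` to `x k ∪ y l`; consequently, every
`X ⊆ V(G)` has a well-defined `t`-closure. -/
theorem stmt14 (s : ℕ) (hs : 2 ≤ s) (α : ℝ) (hα : 0 < α) (hirr : Irrational α)
    (G : UHypergraph s) (t : ℕ) (ht : 0 < t)
    (k l : ℕ) (x y : ℕ → Finset ℕ)
    (hx : IsRigidChain α G t k x) (hy : IsRigidChain α G t l y)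
    (hstart : y 0 ⊆ x k) :
    (IsRigidChain α G t (k + l) (fun i => if i ≤ k then x i else x k ∪ y (i - k)) ∧
      (fun i => if i ≤ k then x i else x k ∪ y (i - k)) (k + l) = x k ∪ y l) ∧
    ∀ X : Finset ℕ, X ⊆ G.V → ∃! C : Finset ℕ, IsTClosure α G t X C := by
  refine ⟨chain_concat hα G t k l x y hx hy hstart, ?_⟩
  intro X hX
  set P : Finset ℕ → Prop := fun C => ∃ k' x', IsRigidChain α G t k' x' ∧ x' 0 = X ∧ x' k' = C
    with hPdef
  have hPX : P X := by
    refine ⟨0, fun _ => X, ⟨?_, ?_, ?_, ?_⟩, rfl, rfl⟩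
    · intro i hi; omega
    · intro i hi; omega
    · intro i _; exact hX
    · intro i hi; omega
  have hPsub : ∀ C, P C → C ⊆ G.V := by
    rintro C ⟨k', x', hc, _, rfl⟩
    exact hc.2.2.1 k' le_rfl
  set T : Finset (Finset ℕ) := G.V.powerset.filter P with hT
  have hXT : X ∈ T := Finset.mem_filter.mpr ⟨Finset.mem_powerset.mpr hX, hPX⟩
  obtain ⟨C, hCT, hCmax⟩ := T.exists_max_image Finset.card ⟨X, hXT⟩
  have hPC : P C := (Finset.mem_filter.mp hCT).2
  have hsub : ∀ k' x', IsRigidChain α G t k' x' → x' 0 = X → x' k' ⊆ C := by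
    intro k' x' hc h0
    obtain ⟨kC, xC, hcC, h0C, hkC⟩ := hPC
    have hst : x' 0 ⊆ xC kC := by
      rw [h0, hkC]
      rw [← h0C, ← hkC]
      exact (h0C.symm ▸ h0 ▸ rfl : xC 0 = x' 0) ▸ chain_start_subset hcC
    obtain ⟨hchain, hend⟩ := chain_concat hα G t kC k' xC x' hcC hc hst
    have hPU : P (xC kC ∪ x' k') := by
      refine ⟨kC + k', _, hchain, ?_, hend⟩
      simp only [Nat.zero_le, if_true]
      exact h0C
    have hUV : xC kC ∪ x' k' ⊆ G.V := hPsub _ hPU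
    have hUT : xC kC ∪ x' k' ∈ T :=
      Finset.mem_filter.mpr ⟨Finset.mem_powerset.mpr hUV, hPU⟩
    have hle := hCmax _ hUT
    have hCC : C ⊆ xC kC ∪ x' k' := hkC ▸ Finset.subset_union_left
    have heq := Finset.eq_of_subset_of_card_le hCC hle
    rw [← hkC] at heq
    have := Finset.union_eq_left.mp heq.symm
    rw [← hkC]
    exact this
  refine ⟨C, ⟨hPC, hsub⟩, ?_⟩
  rintro C' ⟨⟨k', x', hc', h0', hk'⟩, hmax'⟩
  obtain ⟨kC, xC, hcC, h0C, hkC⟩ := hPC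
  have h1 : C' ⊆ C := by rw [← hk']; exact hsub k' x' hc' h0'
  have h2 : C ⊆ C' := by rw [← hkC]; exact hmax' kC xC hcC h0C
  exact Finset.Subset.antisymm h1 h2
end

section
/- Fix positive integers t and r and irrational α > 0. Let ε be the minimum of (eα − v)/v over all integers v, e with 1 ≤ v ≤ t and eα − v > 0, and let K be such that r − Kε < 0. Then in G^s(n, n^{−α}), asymptotically almost surely |cl_t(X)| ≤ K + r for all X ⊆ V with |X| = r. -/
open scoped Classical

open UHypergraph

section Aux

lemma sum_weights {β : Type*} [DecidableEq β] (N : Finset β) (p : ℝ) :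
    ∑ E ∈ N.powerset, p ^ E.card * (1 - p) ^ (N.card - E.card) = 1 := by
  have h := Finset.prod_add (fun _ : β => p) (fun _ : β => 1 - p) N
  simp only [Finset.prod_const, add_sub_cancel, one_pow, Finset.prod_const_one] at h
  rw [Finset.sum_congr rfl (fun E hE => by
    rw [Finset.card_sdiff_of_subset (Finset.mem_powerset.mp hE)]) ] at h
  exact h.symm

lemma sum_weights_superset {β : Type*} [DecidableEq β] {N F : Finset β} (hF : F ⊆ N) (p : ℝ) :
    ∑ E ∈ N.powerset.filter (fun E => F ⊆ E), p ^ E.card * (1 - p) ^ (N.card - E.card)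
      = p ^ F.card := by
  have key : ∑ E ∈ N.powerset.filter (fun E => F ⊆ E), p ^ E.card * (1 - p) ^ (N.card - E.card)
      = ∑ D ∈ (N \ F).powerset, p ^ F.card * (p ^ D.card * (1 - p) ^ ((N \ F).card - D.card)) := by
    refine Finset.sum_nbij' (fun E => E \ F) (fun D => D ∪ F) ?_ ?_ ?_ ?_ ?_
    · intro E hE
      simp only [Finset.mem_filter, Finset.mem_powerset] at hE ⊢
      exact Finset.sdiff_subset_sdiff hE.1 Finset.Subset.rfl
    · intro D hD
      simp only [Finset.mem_powerset] at hD
      simp only [Finset.mem_filter, Finset.mem_powerset]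
      exact ⟨Finset.union_subset (hD.trans (Finset.sdiff_subset)) hF, Finset.subset_union_right⟩
    · intro E hE
      simp only [Finset.mem_filter, Finset.mem_powerset] at hE
      exact Finset.sdiff_union_of_subset hE.2
    · intro D hD
      simp only [Finset.mem_powerset] at hD
      exact Finset.union_sdiff_cancel_right
        (Finset.disjoint_of_subset_left hD Finset.sdiff_disjoint)
    · intro E hE
      simp only [Finset.mem_filter, Finset.mem_powerset] at hE
      obtain ⟨hEN, hFE⟩ := hE
      have h1 : (E \ F).card + F.card = E.card := Finset.card_sdiff_add_card_eq_card hFE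
      have h2 : (N \ F).card + F.card = N.card := Finset.card_sdiff_add_card_eq_card hF
      have h3 : E.card ≤ N.card := Finset.card_le_card hEN
      have h4 : (N \ F).card - (E \ F).card = N.card - E.card := by omega
      rw [h4, ← h1, pow_add]
      ring
  rw [key, ← Finset.mul_sum, sum_weights, mul_one]

lemma weight_nonneg {n : ℕ} {p : ℝ} (hp0 : 0 ≤ p) (hp1 : p ≤ 1) (N E : Finset (Finset (Fin n))) :
    0 ≤ p ^ E.card * (1 - p) ^ (N.card - E.card) :=
  mul_nonneg (pow_nonneg hp0 _) (pow_nonneg (by linarith) _)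

lemma hyperProb_add_compl (s n : ℕ) (p : ℝ) (A : Set (Finset (Finset (Fin n)))) :
    hyperProb s n p A + hyperProb s n p {E | E ∉ A} = 1 := by
  unfold hyperProb
  rw [← Finset.sum_add_distrib]
  refine Eq.trans (Finset.sum_congr rfl fun E _ => ?_) (sum_weights (edgeCandidates s n) p)
  by_cases h : E ∈ A <;> simp [h]

lemma hyperProb_nonneg {s n : ℕ} {p : ℝ} (hp0 : 0 ≤ p) (hp1 : p ≤ 1)
    (A : Set (Finset (Finset (Fin n)))) : 0 ≤ hyperProb s n p A := by
  unfold hyperProb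
  refine Finset.sum_nonneg fun E _ => ?_
  split
  · exact weight_nonneg hp0 hp1 _ _
  · exact le_refl 0

lemma hyperProb_union_bound {s n : ℕ} {p : ℝ} (hp0 : 0 ≤ p) (hp1 : p ≤ 1)
    (A : Set (Finset (Finset (Fin n)))) (Fam : Finset (Finset (Finset (Fin n))))
    (hFam : Fam ⊆ (edgeCandidates s n).powerset)
    (h : ∀ E ∈ (edgeCandidates s n).powerset, E ∈ A → ∃ F ∈ Fam, F ⊆ E) :
    hyperProb s n p A ≤ ∑ F ∈ Fam, p ^ F.card := by
  set N := edgeCandidates s n with hN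
  have step1 : hyperProb s n p A ≤ ∑ E ∈ N.powerset, ∑ F ∈ Fam,
      (if F ⊆ E then p ^ E.card * (1 - p) ^ (N.card - E.card) else 0) := by
    unfold hyperProb
    refine Finset.sum_le_sum fun E hE => ?_
    have hterm : ∀ F : Finset (Finset (Fin n)),
        0 ≤ (if F ⊆ E then p ^ E.card * (1 - p) ^ (N.card - E.card) else 0) := by
      intro F; split
      · exact weight_nonneg hp0 hp1 _ _
      · exact le_refl 0
    by_cases hA : E ∈ A
    · obtain ⟨F0, hF0, hF0E⟩ := h E hE hA
      simp only [hA, if_true]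
      have := Finset.single_le_sum (f := fun F =>
          (if F ⊆ E then p ^ E.card * (1 - p) ^ (N.card - E.card) else 0))
        (fun F _ => hterm F) hF0
      simpa [hF0E] using this
    · simp only [hA, if_false]
      exact Finset.sum_nonneg fun F _ => hterm F
  refine step1.trans ?_
  rw [Finset.sum_comm]
  refine le_of_eq (Finset.sum_congr rfl fun F hF => ?_)
  rw [← Finset.sum_filter]
  exact sum_weights_superset (Finset.mem_powerset.mp (hFam hF)) p

end Aux

open UHypergraph in
lemma chain_gives_bad {s t r K n : ℕ} {α ε : ℝ} (hα : 0 < α)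
    (hε : IsLeast {x : ℝ | ∃ v e : ℕ, 1 ≤ v ∧ v ≤ t ∧ 0 < (e : ℝ) * α - v ∧
      x = ((e : ℝ) * α - v) / v} ε)
    (hK : (r : ℝ) - (K : ℝ) * ε < 0)
    (E : Finset (Finset (Fin n))) (X : Finset ℕ) (hX : X.card = r)
    (k : ℕ) (x : ℕ → Finset ℕ)
    (hchain : IsRigidChain α (ofEdges s n E) t k x) (hx0 : x 0 = X)
    (hbig : K + r < (x k).card) :
    ∃ F ⊆ E, (F.biUnion id).card ≤ K + r + t ∧
      ((F.biUnion id).card : ℝ) < α * F.card := by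
  set G := ofEdges s n E with hG
  obtain ⟨hmono, hsize, hsubV, hrigid⟩ := hchain
  -- ε is positive
  have hεpos : 0 < ε := by
    obtain ⟨v, e, hv1, _, hpos, hxe⟩ := hε.1
    have hv : (0:ℝ) < v := by exact_mod_cast hv1
    rw [hxe]; exact div_pos hpos hv
  -- X is contained in every element of the chain
  have hXsub : ∀ i, i ≤ k → X ⊆ x i := by
    intro i
    induction i with
    | zero => intro _; rw [hx0]
    | succ m ih =>
      intro h
      exact (ih (by omega)).trans (hmono m (by omega))
  -- the edge counter
  set m : ℕ → ℕ := fun i => (G.E.filter (fun f => f ⊆ x i ∧ ¬ f ⊆ X)).card with hm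
  -- the key invariant
  have hInv : ∀ i, i ≤ k → ((x i \ X).card : ℝ) * (1 + ε) ≤ α * m i := by
    intro i
    induction i with
    | zero =>
      intro _
      rw [hx0]
      simp only [Finset.sdiff_self, Finset.card_empty, Nat.cast_zero, zero_mul]
      positivity
    | succ i ih =>
      intro hik
      have hik' : i < k := by omega
      have ihh := ih (by omega)
      by_cases hne : x i = x (i + 1)
      · have : m i = m (i + 1) := by rw [hm]; simp only; rw [hne]
        rw [← hne, ← this]; exact ihh
      · -- a genuine step
        have hV : x (i + 1) ⊆ G.V := hsubV (i + 1) (by omega)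
        have hVi : (G.restrict (x (i + 1))).V = x (i + 1) := by
          show G.V ∩ x (i + 1) = x (i + 1)
          exact Finset.inter_eq_right.mpr hV
        have hss : x i ⊂ x (i + 1) := (hmono i hik').ssubset_of_ne hne
        have dense := hrigid i hik' (x i) Finset.Subset.rfl (by rw [hVi]; exact hss)
        rw [IsDense, exVal, hVi] at dense
        set e' : ℕ := ((G.restrict (x (i + 1))).E.filter (fun f => ¬ f ⊆ x i)).card with he'
        set v' : ℕ := (x (i + 1) \ x i).card with hv'
        have hdense : (v' : ℝ) - (e' : ℝ) * α < 0 := dense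
        have hv1 : 1 ≤ v' := by
          obtain ⟨a, haa, hab⟩ := Finset.exists_of_ssubset hss
          have : a ∈ x (i + 1) \ x i := Finset.mem_sdiff.mpr ⟨haa, hab⟩
          have := Finset.card_pos.mpr ⟨a, this⟩
          omega
        have hvt : v' ≤ t := hsize i hik'
        have hεle : ε ≤ ((e' : ℝ) * α - v') / v' :=
          hε.2 ⟨v', e', hv1, hvt, by linarith, rfl⟩
        have hvpos : (0:ℝ) < v' := by exact_mod_cast hv1
        have hεv : ε * v' ≤ (e' : ℝ) * α - v' := by
          rw [le_div_iff₀ hvpos] at hεle; linarith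
        -- e' counts edges inside x (i+1) not inside x i
        have he'eq : e' = (G.E.filter (fun f => f ⊆ x (i + 1) ∧ ¬ f ⊆ x i)).card := by
          rw [he']
          congr 1
          show (G.E.filter (fun f => f ⊆ x (i + 1))).filter (fun f => ¬ f ⊆ x i) = _
          rw [Finset.filter_filter]
        -- the edge counter grows by at least e'
        have hmgrow : m i + e' ≤ m (i + 1) := by
          rw [hm, he'eq]
          simp only
          set A := G.E.filter (fun f => f ⊆ x i ∧ ¬ f ⊆ X) with hA
          set B := G.E.filter (fun f => f ⊆ x (i + 1) ∧ ¬ f ⊆ x i) with hB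
          have hdisj : Disjoint A B := by
            rw [Finset.disjoint_left]
            intro f hfA hfB
            rw [hA, Finset.mem_filter] at hfA
            rw [hB, Finset.mem_filter] at hfB
            exact hfB.2.2 hfA.2.1
          have hsubu : A ∪ B ⊆ G.E.filter (fun f => f ⊆ x (i + 1) ∧ ¬ f ⊆ X) := by
            intro f hf
            rcases Finset.mem_union.mp hf with hf | hf
            · rw [hA, Finset.mem_filter] at hf
              exact Finset.mem_filter.mpr ⟨hf.1, hf.2.1.trans (hmono i hik'), hf.2.2⟩
            · rw [hB, Finset.mem_filter] at hf
              refine Finset.mem_filter.mpr ⟨hf.1, hf.2.1, fun hfX => hf.2.2 ?_⟩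
              exact hfX.trans (hXsub i (by omega))
          calc A.card + B.card = (A ∪ B).card := (Finset.card_union_of_disjoint hdisj).symm
            _ ≤ _ := Finset.card_le_card hsubu
        -- the vertex counter grows by at most v'
        have hngrow : (x (i + 1) \ X).card ≤ (x i \ X).card + v' := by
          rw [hv']
          calc (x (i + 1) \ X).card ≤ ((x i \ X) ∪ (x (i + 1) \ x i)).card := by
                refine Finset.card_le_card fun a ha => ?_
                rw [Finset.mem_sdiff] at ha
                rw [Finset.mem_union, Finset.mem_sdiff, Finset.mem_sdiff]
                by_cases hax : a ∈ x i
                · exact Or.inl ⟨hax, ha.2⟩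
                · exact Or.inr ⟨ha.1, hax⟩
            _ ≤ _ := Finset.card_union_le _ _
        have hc1 : ((x (i + 1) \ X).card : ℝ) ≤ ((x i \ X).card : ℝ) + v' := by
          exact_mod_cast hngrow
        have hc2 : (m i : ℝ) + e' ≤ (m (i + 1) : ℝ) := by exact_mod_cast hmgrow
        nlinarith [hεpos, hα, hc1, hc2, ihh, hεv]
  -- there is a step where the count of new vertices first exceeds K
  have hek : K + 1 ≤ (x k \ X).card := by
    have h1 : (x k).card ≤ (x k \ X).card + X.card := by
      calc (x k).card ≤ ((x k \ X) ∪ X).card := by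
            refine Finset.card_le_card fun a ha => ?_
            rw [Finset.mem_union, Finset.mem_sdiff]
            by_cases hax : a ∈ X
            · exact Or.inr hax
            · exact Or.inl ⟨ha, hax⟩
        _ ≤ _ := Finset.card_union_le _ _
    omega
  have hexj : ∃ j, j ≤ k ∧ K + 1 ≤ (x j \ X).card := ⟨k, le_rfl, hek⟩
  set j := Nat.find hexj with hj
  obtain ⟨hjk, hjK⟩ := Nat.find_spec hexj
  rw [← hj] at hjk hjK
  have hj1 : 1 ≤ j := by
    rcases Nat.eq_zero_or_pos j with h0 | h1
    · exfalso
      rw [h0, hx0] at hjK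
      simp at hjK
    · exact h1
  have hprev : (x (j - 1) \ X).card ≤ K := by
    have := Nat.find_min hexj (m := j - 1) (by omega)
    push_neg at this
    have := this (by omega)
    omega
  have hnj : (x j \ X).card ≤ K + t := by
    have hstep : (x j \ X).card ≤ (x (j - 1) \ X).card + (x j \ x (j - 1)).card := by
      calc (x j \ X).card ≤ ((x (j - 1) \ X) ∪ (x j \ x (j - 1))).card := by
            refine Finset.card_le_card fun a ha => ?_
            rw [Finset.mem_sdiff] at ha
            rw [Finset.mem_union, Finset.mem_sdiff, Finset.mem_sdiff]
            by_cases hax : a ∈ x (j - 1)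
            · exact Or.inl ⟨hax, ha.2⟩
            · exact Or.inr ⟨ha.1, hax⟩
        _ ≤ _ := Finset.card_union_le _ _
    have hsz : (x (j - 1 + 1) \ x (j - 1)).card ≤ t := hsize (j - 1) (by omega)
    rw [show j - 1 + 1 = j by omega] at hsz
    omega
  have hbj : (x j).card ≤ r + (x j \ X).card := by
    have h1 : (x j).card ≤ (X ∪ (x j \ X)).card := by
      refine Finset.card_le_card fun a ha => ?_
      rw [Finset.mem_union, Finset.mem_sdiff]
      by_cases hax : a ∈ X
      · exact Or.inl hax
      · exact Or.inr ⟨ha, hax⟩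
    have h2 := Finset.card_union_le X (x j \ X)
    omega
  have hInvj := hInv j hjk
  -- build the witnessing edge family
  set F := E.filter (fun e => e.card = s ∧ (e.image Fin.val ⊆ x j) ∧ ¬ (e.image Fin.val ⊆ X))
    with hF
  have hinj : Function.Injective (fun e : Finset (Fin n) => e.image Fin.val) :=
    Finset.image_injective Fin.val_injective
  have hFcard : F.card = m j := by
    rw [hm]
    simp only
    have : G.E.filter (fun f => f ⊆ x j ∧ ¬ f ⊆ X)
        = ((E.filter (fun e => e.card = s)).filter
            (fun e => e.image Fin.val ⊆ x j ∧ ¬ e.image Fin.val ⊆ X)).image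
          (fun e => e.image Fin.val) := by
      show ((E.filter (fun e => e.card = s)).image (fun e => e.image Fin.val)).filter _ = _
      rw [Finset.filter_image]
    rw [this, Finset.card_image_of_injective _ hinj, hF, Finset.filter_filter]
  have hUsub : (F.biUnion id).image Fin.val ⊆ x j := by
    intro a ha
    rw [Finset.mem_image] at ha
    obtain ⟨b, hb, rfl⟩ := ha
    rw [Finset.mem_biUnion] at hb
    obtain ⟨e, heF, hbe⟩ := hb
    rw [hF, Finset.mem_filter] at heF
    exact heF.2.2.1 (Finset.mem_image_of_mem Fin.val hbe)
  have hUcard : (F.biUnion id).card ≤ (x j).card := by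
    rw [← Finset.card_image_of_injective (F.biUnion id) Fin.val_injective]
    exact Finset.card_le_card hUsub
  refine ⟨F, Finset.filter_subset _ _, by omega, ?_⟩
  have hr1 : (r : ℝ) < ε * K := by linarith [hK]
  have hKj : (K : ℝ) ≤ ((x j \ X).card : ℝ) := by
    have : K ≤ (x j \ X).card := by omega
    exact_mod_cast this
  have hb1 : ((F.biUnion id).card : ℝ) ≤ ((x j).card : ℝ) := by exact_mod_cast hUcard
  have hb2 : ((x j).card : ℝ) ≤ (r : ℝ) + ((x j \ X).card : ℝ) := by exact_mod_cast hbj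
  rw [hFcard]
  nlinarith [hInvj, hεpos]

lemma sum_pow_le_g (s n M : ℕ) (α : ℝ) (p : ℝ) (hp0 : 0 ≤ p) :
    ∑ F ∈ (edgeCandidates s n).powerset.filter
        (fun F => (F.biUnion id).card ≤ M ∧ ((F.biUnion id).card : ℝ) < α * F.card), p ^ F.card
      ≤ ∑ q ∈ ((Finset.range (M + 1)) ×ˢ (Finset.range (2 ^ M + 1))).filter
          (fun q => (q.1 : ℝ) < α * q.2),
          (n.choose q.1 : ℝ) * 2 ^ (2 ^ M) * p ^ q.2 := by
  set S := (edgeCandidates s n).powerset.filter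
      (fun F => (F.biUnion id).card ≤ M ∧ ((F.biUnion id).card : ℝ) < α * F.card) with hS
  set Pfin := ((Finset.range (M + 1)) ×ˢ (Finset.range (2 ^ M + 1))).filter
      (fun q => (q.1 : ℝ) < α * q.2) with hPfin
  have hmaps : ∀ F ∈ S, ((F.biUnion id).card, F.card) ∈ Pfin := by
    intro F hF
    rw [hS, Finset.mem_filter] at hF
    obtain ⟨-, hFu, hFd⟩ := hF
    have h1 : F ⊆ (F.biUnion id).powerset := fun e he =>
      Finset.mem_powerset.mpr (Finset.subset_biUnion_of_mem id he)
    have h2 : F.card ≤ 2 ^ (F.biUnion id).card :=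
      le_trans (Finset.card_le_card h1) (le_of_eq (Finset.card_powerset _))
    have h3 : F.card ≤ 2 ^ M := h2.trans (Nat.pow_le_pow_right (by norm_num) hFu)
    rw [hPfin, Finset.mem_filter, Finset.mem_product]
    exact ⟨⟨Finset.mem_range.mpr (by omega), Finset.mem_range.mpr (by omega)⟩, hFd⟩
  rw [← Finset.sum_fiberwise_of_maps_to hmaps]
  refine Finset.sum_le_sum fun q hq => ?_
  have hq1M : q.1 ≤ M := by
    rw [hPfin, Finset.mem_filter, Finset.mem_product] at hq
    have := Finset.mem_range.mp hq.1.1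
    omega
  set inner := S.filter (fun F => ((F.biUnion id).card, F.card) = q) with hinner
  have hcardeq : ∀ F ∈ inner, p ^ F.card = p ^ q.2 := by
    intro F hF
    rw [hinner, Finset.mem_filter] at hF
    rw [← hF.2]
  rw [Finset.sum_congr rfl hcardeq, Finset.sum_const, nsmul_eq_mul]
  have hsub : inner ⊆ (Finset.univ.powersetCard q.1).biUnion (fun U => U.powerset.powerset) := by
    intro F hF
    rw [hinner, Finset.mem_filter] at hF
    obtain ⟨-, hstat⟩ := hF
    rw [Finset.mem_biUnion]
    refine ⟨F.biUnion id, ?_, ?_⟩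
    · exact Finset.mem_powersetCard.mpr ⟨Finset.subset_univ _, by rw [← hstat]⟩
    · exact Finset.mem_powerset.mpr fun e he =>
        Finset.mem_powerset.mpr (Finset.subset_biUnion_of_mem id he)
  have hcb : inner.card ≤ n.choose q.1 * 2 ^ (2 ^ M) := by
    calc inner.card ≤ ((Finset.univ.powersetCard q.1).biUnion
          fun U => U.powerset.powerset).card := Finset.card_le_card hsub
      _ ≤ ∑ U ∈ Finset.univ.powersetCard q.1, (U.powerset.powerset).card :=
          Finset.card_biUnion_le
      _ ≤ ∑ _U ∈ Finset.univ.powersetCard q.1, 2 ^ (2 ^ M) := by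
          refine Finset.sum_le_sum fun U hU => ?_
          rw [Finset.card_powerset, Finset.card_powerset,
            (Finset.mem_powersetCard.mp hU).2]
          exact Nat.pow_le_pow_right (by norm_num)
            (Nat.pow_le_pow_right (by norm_num) hq1M)
      _ = (Finset.univ.powersetCard q.1).card * 2 ^ (2 ^ M) := by
          rw [Finset.sum_const, smul_eq_mul]
      _ = n.choose q.1 * 2 ^ (2 ^ M) := by
          rw [Finset.card_powersetCard, Finset.card_fin]
  have hcbR : (inner.card : ℝ) ≤ (n.choose q.1 : ℝ) * 2 ^ (2 ^ M) := by exact_mod_cast hcb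
  exact mul_le_mul_of_nonneg_right hcbR (pow_nonneg hp0 _)

lemma term_tendsto (u f : ℕ) (C α : ℝ) (hC : 0 ≤ C) (hα : 0 < α) (h : (u : ℝ) < α * f) :
    Filter.Tendsto (fun n : ℕ => (n.choose u : ℝ) * C * ((n : ℝ) ^ (-α)) ^ f)
      Filter.atTop (nhds 0) := by
  have hf : 0 < f := by
    rcases Nat.eq_zero_or_pos f with rfl | hf
    · simp at h
      have : (0:ℝ) ≤ (u:ℝ) := Nat.cast_nonneg u
      linarith
    · exact hf
  have hy : 0 < α * f - u := by linarith
  have limit : Filter.Tendsto (fun n : ℕ => C * (n : ℝ) ^ (-(α * f - u)))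
      Filter.atTop (nhds 0) := by
    have h1 := (tendsto_rpow_neg_atTop hy).comp tendsto_natCast_atTop_atTop (α := ℕ)
    simpa using h1.const_mul C
  refine squeeze_zero_norm (fun n => ?_) limit
  rcases Nat.eq_zero_or_pos n with rfl | hn
  · have hα' : -α ≠ 0 := by linarith
    have hy' : -(α * f - u) ≠ 0 := by linarith
    simp only [Nat.cast_zero, Real.zero_rpow hα', zero_pow hf.ne', mul_zero, norm_zero]
    positivity
  · have hn1 : (1:ℝ) ≤ (n:ℝ) := by exact_mod_cast hn
    have hn0 : (0:ℝ) < (n:ℝ) := by linarith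
    rw [Real.norm_of_nonneg (by positivity)]
    have hch : (n.choose u : ℝ) ≤ (n : ℝ) ^ (u : ℝ) := by
      rw [Real.rpow_natCast]
      exact_mod_cast Nat.choose_le_pow n u
    have h1 : (n.choose u : ℝ) * C * ((n : ℝ) ^ (-α)) ^ f
        ≤ (n : ℝ) ^ (u : ℝ) * C * ((n : ℝ) ^ (-α)) ^ f := by
      apply mul_le_mul_of_nonneg_right (mul_le_mul_of_nonneg_right hch hC) (by positivity)
    refine h1.trans (le_of_eq ?_)
    rw [← Real.rpow_natCast ((n : ℝ) ^ (-α)) f, ← Real.rpow_mul hn0.le]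
    rw [show (n : ℝ) ^ (u : ℝ) * C * (n : ℝ) ^ (-α * f)
        = C * ((n : ℝ) ^ (u : ℝ) * (n : ℝ) ^ (-α * f)) by ring]
    rw [← Real.rpow_add hn0]
    ring_nf

/-- Finite Closure Theorem: with `ε` the minimum of
`(eα - v)/v` over `1 ≤ v ≤ t`, `eα - v > 0`, and `K` with `r - Kε < 0`, a.a.s.
every `r`-set `X` in `G^s(n, n^{-α})` has `|cl_t(X)| ≤ K + r`. -/
theorem stmt15 (s t r : ℕ) (hs : 2 ≤ s) (ht : 0 < t) (hr : 0 < r)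
    (α : ℝ) (hα : 0 < α) (hirr : Irrational α)
    (ε : ℝ)
    (hε : IsLeast {x : ℝ | ∃ v e : ℕ, 1 ≤ v ∧ v ≤ t ∧ 0 < (e : ℝ) * α - v ∧
      x = ((e : ℝ) * α - v) / v} ε)
    (K : ℕ) (hK : (r : ℝ) - (K : ℝ) * ε < 0) :
    Filter.Tendsto
      (fun n => hyperProb s n ((n : ℝ) ^ (-α))
        {E | ∀ X ⊆ Finset.range n, X.card = r →
          ∀ C : Finset ℕ, IsTClosure α (ofEdges s n E) t X C → C.card ≤ K + r})
      Filter.atTop (nhds 1) := by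
  classical
  set M := K + r + t with hM
  set Pfin := ((Finset.range (M + 1)) ×ˢ (Finset.range (2 ^ M + 1))).filter
      (fun q => (q.1 : ℝ) < α * q.2) with hPfin
  set g : ℕ → ℝ := fun n => ∑ q ∈ Pfin,
      (n.choose q.1 : ℝ) * 2 ^ (2 ^ M) * ((n : ℝ) ^ (-α)) ^ q.2 with hg
  have hgto : Filter.Tendsto g Filter.atTop (nhds 0) := by
    have h0 : Filter.Tendsto (fun n : ℕ => ∑ q ∈ Pfin,
        (n.choose q.1 : ℝ) * 2 ^ (2 ^ M) * ((n : ℝ) ^ (-α)) ^ q.2)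
        Filter.atTop (nhds (∑ _q ∈ Pfin, (0 : ℝ))) := by
      refine tendsto_finset_sum _ fun q hq => ?_
      have hcond : (q.1 : ℝ) < α * q.2 := (Finset.mem_filter.mp hq).2
      exact term_tendsto q.1 q.2 (2 ^ (2 ^ M)) α (by positivity) hα hcond
    simpa using h0
  have hbounds : ∀ᶠ n in Filter.atTop,
      1 - g n ≤ hyperProb s n ((n : ℝ) ^ (-α))
        {E | ∀ X ⊆ Finset.range n, X.card = r →
          ∀ C : Finset ℕ, IsTClosure α (ofEdges s n E) t X C → C.card ≤ K + r}
      ∧ hyperProb s n ((n : ℝ) ^ (-α))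
        {E | ∀ X ⊆ Finset.range n, X.card = r →
          ∀ C : Finset ℕ, IsTClosure α (ofEdges s n E) t X C → C.card ≤ K + r} ≤ 1 := by
    filter_upwards [Filter.eventually_ge_atTop 1] with n hn
    set p := (n : ℝ) ^ (-α) with hp
    have hp0 : 0 ≤ p := Real.rpow_nonneg (Nat.cast_nonneg n) _
    have hp1 : p ≤ 1 := by
      apply Real.rpow_le_one_of_one_le_of_nonpos
      · exact_mod_cast hn
      · linarith
    set A : Set (Finset (Finset (Fin n))) := {E | ∀ X ⊆ Finset.range n, X.card = r →
          ∀ C : Finset ℕ, IsTClosure α (ofEdges s n E) t X C → C.card ≤ K + r} with hA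
    set FamBad := (edgeCandidates s n).powerset.filter
        (fun F => (F.biUnion id).card ≤ M ∧ ((F.biUnion id).card : ℝ) < α * F.card) with hFam
    have hclaim : ∀ E ∈ (edgeCandidates s n).powerset, E ∈ {E | E ∉ A} →
        ∃ F ∈ FamBad, F ⊆ E := by
      intro E hE hEA
      simp only [Set.mem_setOf_eq, hA] at hEA
      push_neg at hEA
      obtain ⟨X, hXsub, hXcard, C, hclo, hCc⟩ := hEA
      obtain ⟨⟨k, x, hch, hx0, hxk⟩, -⟩ := hclo
      have hbig : K + r < (x k).card := by rw [hxk]; omega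
      obtain ⟨F, hFE, hFu, hFd⟩ :=
        chain_gives_bad hα hε hK E X hXcard k x hch hx0 hbig
      refine ⟨F, ?_, hFE⟩
      rw [hFam, Finset.mem_filter, Finset.mem_powerset]
      exact ⟨hFE.trans (Finset.mem_powerset.mp hE), by omega, hFd⟩
    have hcompl := hyperProb_add_compl s n p A
    have hub := hyperProb_union_bound hp0 hp1 {E | E ∉ A} FamBad
      (Finset.filter_subset _ _) hclaim
    have hsum : ∑ F ∈ FamBad, p ^ F.card ≤ g n := by
      rw [hg]
      exact sum_pow_le_g s n M α p hp0
    have hnn := hyperProb_nonneg (s := s) hp0 hp1 A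
    constructor
    · linarith
    · have hnn2 := hyperProb_nonneg (s := s) hp0 hp1 {E | E ∉ A}
      linarith
  have hlo : Filter.Tendsto (fun n => 1 - g n) Filter.atTop (nhds 1) := by
    have h2 := hgto.const_sub (b := 1)
    simpa using h2
  exact tendsto_of_tendsto_of_tendsto_of_le_of_le' hlo tendsto_const_nhds
    (hbounds.mono fun n hn => hn.1) (hbounds.mono fun n hn => hn.2)
end
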